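/- Let n ≥ 1 and let φ be a ℚ-linear automorphism of ℚⁿ (i.e., of the vector space Fin n → ℚ). Then the following are equivalent: (i) for every translation-invariant total preorder ⪯ on ℚⁿ and all u, v ∈ ℚⁿ one has φ(u) ⪯ φ(v) if and only if u ⪯ v; (ii) there exists a rational number λ > 0 such that φ(x) = λ • x for all x ∈ ℚⁿ. -/

import Mathlib

/-- A translation-invariant total preorder on an additive group: a total, transitive
relation invariant under translation. -/
def IsTransInvPreorder {M : Type*} [AddGroup M] (r : M → M → Prop) : Prop :=
  (∀ u v, r u v ∨ r v u) ∧ (∀ u v w, r u v → r v w → r u w) ∧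
    (∀ u v w, r u v → r (u + w) (v + w))

theorem stmt12 (n : ℕ) (hn : 1 ≤ n)
    (φ : (Fin n → ℚ) ≃ₗ[ℚ] (Fin n → ℚ)) :
    (∀ r : (Fin n → ℚ) → (Fin n → ℚ) → Prop, IsTransInvPreorder r →
      ∀ u v : Fin n → ℚ, (r (φ u) (φ v) ↔ r u v)) ↔
    (∃ l : ℚ, 0 < l ∧ ∀ x : Fin n → ℚ, φ x = l • x) := by
  constructor
  · intro H
    set d : Fin n → ℚ := fun i => φ (Pi.single i 1) i with hd
    have key1 : ∀ (i : Fin n) (u v : Fin n → ℚ), φ u i ≤ φ v i ↔ u i ≤ v i := by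
      intro i u v
      exact H (fun u v => u i ≤ v i)
        ⟨fun u v => le_total _ _, fun u v w h1 h2 => le_trans h1 h2,
         fun u v w h => by simpa using add_le_add_right h (w i)⟩ u v
    have key2 : ∀ (i j : Fin n) (u v : Fin n → ℚ),
        φ u i + φ u j ≤ φ v i + φ v j ↔ u i + u j ≤ v i + v j := by
      intro i j u v
      exact H (fun u v => u i + u j ≤ v i + v j)
        ⟨fun u v => le_total _ _, fun u v w h1 h2 => le_trans h1 h2,
         fun u v w h => by
          simp only [Pi.add_apply]; linarith⟩ u v
    have hzero : ∀ (u : Fin n → ℚ) (i : Fin n), u i = 0 → φ u i = 0 := by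
      intro u i h
      have h1 := (key1 i u 0).2 (by simp [h])
      have h2 := (key1 i 0 u).2 (by simp [h])
      simp only [map_zero] at h1 h2
      simp only [Pi.zero_apply] at h1 h2
      exact le_antisymm h1 h2
    have hdiag : ∀ (u : Fin n → ℚ) (i : Fin n), φ u i = d i * u i := by
      intro u i
      have hw : (u - u i • (Pi.single i 1 : Fin n → ℚ)) i = 0 := by simp
      have := hzero _ i hw
      rw [map_sub, map_smul] at this
      simp only [Pi.sub_apply, Pi.smul_apply, smul_eq_mul] at this
      have : φ u i = u i * φ (Pi.single i 1) i := by linarith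
      rw [this, hd]; ring
    have hpos : ∀ i : Fin n, 0 < d i := by
      intro i
      by_contra h
      push_neg at h
      have h1 := (key1 i (Pi.single i 1) 0).1 (by simpa [map_zero, hd] using h)
      simp only [Pi.single_eq_same, Pi.zero_apply] at h1
      linarith
    have heq : ∀ i j : Fin n, d i = d j := by
      intro i j
      by_cases hij : i = j
      · rw [hij]
      · set u : Fin n → ℚ := Pi.single i 1 - Pi.single j 1 with hu
        have hui : u i = 1 := by simp [hu, Pi.single_eq_of_ne hij]
        have huj : u j = -1 := by simp [hu, Pi.single_eq_of_ne (Ne.symm hij)]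
        have hfi : φ u i = d i := by rw [hdiag u i, hui, mul_one]
        have hfj : φ u j = -(d j) := by rw [hdiag u j, huj]; ring
        have h1 := (key2 i j u 0).2 (by simp [hui, huj])
        have h2 := (key2 i j 0 u).2 (by simp [hui, huj])
        simp only [map_zero, Pi.zero_apply, hfi, hfj] at h1 h2
        linarith
    refine ⟨d ⟨0, hn⟩, hpos _, ?_⟩
    intro x
    funext i
    rw [Pi.smul_apply, smul_eq_mul, hdiag x i, heq i ⟨0, hn⟩]
  · rintro ⟨l, hl, hφ⟩ r ⟨tot, htrans, hinv⟩ u v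
    -- reduce to a statement about r 0 _
    have h0 : ∀ u v : Fin n → ℚ, r u v ↔ r 0 (v - u) := by
      intro u v
      constructor
      · intro h; simpa [sub_eq_add_neg] using hinv u v (-u) h
      · intro h; simpa using hinv 0 (v - u) u h
    -- multiplying by positive naturals
    have N : ∀ (k : ℕ) (w : Fin n → ℚ), r 0 w → r 0 (((k : ℚ) + 1) • w) := by
      intro k w h
      induction k with
      | zero => simpa using h
      | succ k ih =>
        have step := hinv 0 w (((k : ℚ) + 1) • w) h
        rw [zero_add] at step
        have e : (((k : ℚ) + 1) + 1) • w = w + ((k : ℚ) + 1) • w := by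
          rw [add_smul, one_smul, add_comm]
        push_cast
        rw [e]
        exact htrans _ _ _ ih step
    have B : ∀ (k : ℕ) (w : Fin n → ℚ), r 0 (((k : ℚ) + 1) • w) → r 0 w := by
      intro k w h
      rcases tot 0 w with h0w | hw0
      · exact h0w
      · induction k with
        | zero => simpa using h
        | succ k ih =>
          apply ih
          have step := hinv w 0 (((k : ℚ) + 1) • w) hw0
          rw [zero_add] at step
          have e : (((k : ℚ) + 1) + 1) • w = w + ((k : ℚ) + 1) • w := by
            rw [add_smul, one_smul, add_comm]
          push_cast at h
          rw [e] at h
          exact htrans _ _ _ h step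
    -- multiplying by l
    have S : ∀ w : Fin n → ℚ, r 0 (l • w) ↔ r 0 w := by
      intro w
      have hnum : (0 : ℤ) < l.num := Rat.num_pos.2 hl
      obtain ⟨p, hp⟩ : ∃ p : ℕ, l.num.toNat = p + 1 :=
        ⟨l.num.toNat - 1, by omega⟩
      obtain ⟨q, hq⟩ : ∃ q : ℕ, l.den = q + 1 :=
        ⟨l.den - 1, by have := l.den_pos; omega⟩
      have key : ((q : ℚ) + 1) • (l • w) = ((p : ℚ) + 1) • w := by
        rw [smul_smul]
        congr 1
        have h1' : (p : ℤ) + 1 = l.num := by omega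
        have h1 : ((p : ℚ) + 1) = (l.num : ℚ) := by exact_mod_cast h1'
        have h2 : ((q : ℚ) + 1) = (l.den : ℚ) := by
          rw [hq]; push_cast; ring
        rw [h1, h2, mul_comm,
          ← eq_div_iff (by exact_mod_cast l.den_ne_zero : (l.den : ℚ) ≠ 0)]
        exact (Rat.num_div_den l).symm
      constructor
      · intro h
        exact B p w (by rw [← key]; exact N q _ h)
      · intro h
        have := N p w h
        rw [← key] at this
        exact B q _ this
    rw [hφ u, hφ v, h0, h0 u v, ← smul_sub]
    exact S _
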